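/- arXiv:2107.09316 — 7 statements merged into one kernel-verified Lean document; each statement's English description precedes it below -/
import Mathlib

section
/- For any distribution function G on ℝ and any p ∈ [0,1], the function F_p(x) = G(x) + p·(1-G(x))·log(1-G(x)) is a valid distribution function, i.e., it is nondecreasing, tends to 0 as x → -∞ and to 1 as x → +∞, where we interpret (1-G(x))·log(1-G(x)) = 0 when G(x) = 1. -/
open Filter Topology

lemma phi_cont (p : ℝ) : Continuous (fun u : ℝ => u + p * (1 - u) * Real.log (1 - u)) := by
  have : (fun u : ℝ => u + p * (1 - u) * Real.log (1 - u))
      = fun u : ℝ => u + p * ((1 - u) * Real.log (1 - u)) := by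
    funext u; ring
  rw [this]
  exact continuous_id.add (continuous_const.mul
    (Real.continuous_mul_log.comp (continuous_const.sub continuous_id)))

lemma phi_mono (p : ℝ) (hp0 : 0 ≤ p) (hp1 : p ≤ 1) :
    MonotoneOn (fun u : ℝ => u + p * (1 - u) * Real.log (1 - u)) (Set.Icc 0 1) := by
  have hint : interior (Set.Icc (0:ℝ) 1) = Set.Ioo 0 1 := interior_Icc
  apply monotoneOn_of_deriv_nonneg (convex_Icc 0 1) (phi_cont p).continuousOn
  · intro u hu
    rw [hint] at hu
    have hne : (1 : ℝ) - u ≠ 0 := by nlinarith [hu.2]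
    have h1 : HasDerivAt (fun u : ℝ => 1 - u) (-1) u := (hasDerivAt_id u).const_sub 1
    have hlog : HasDerivAt (fun u : ℝ => Real.log (1 - u)) ((1 - u)⁻¹ * -1) u :=
      (Real.hasDerivAt_log hne).comp u h1
    have hprod := h1.mul hlog
    have h := (hasDerivAt_id u).add (((hprod).const_mul p))
    simp only [Pi.add_def, Pi.mul_apply, id_eq, ← mul_assoc] at h
    exact h.differentiableAt.differentiableWithinAt
  · intro u hu
    rw [hint] at hu
    have hne : (1 : ℝ) - u ≠ 0 := by nlinarith [hu.2]
    have h1 : HasDerivAt (fun u : ℝ => 1 - u) (-1) u := (hasDerivAt_id u).const_sub 1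
    have hlog : HasDerivAt (fun u : ℝ => Real.log (1 - u)) ((1 - u)⁻¹ * -1) u :=
      (Real.hasDerivAt_log hne).comp u h1
    have hprod := h1.mul hlog
    have hkey : (1 - u) * ((1 - u)⁻¹ * -1) = -1 := by field_simp
    rw [hkey] at hprod
    have h := (hasDerivAt_id u).add ((hprod).const_mul p)
    simp only [Pi.add_def, Pi.mul_apply, id_eq, ← mul_assoc] at h
    rw [h.deriv]
    have hlogle : Real.log (1 - u) ≤ 0 :=
      Real.log_nonpos (by linarith [hu.2]) (by linarith [hu.1])
    nlinarith

/-- The record-based transmuted map `F_p(x) = G(x) + p·(1-G(x))·log(1-G(x))` of a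
distribution function `G` is again a distribution function, for any `p ∈ [0,1]`.
(Here `Real.log 0 = 0`, encoding the convention `(1-G(x))·log(1-G(x)) = 0` when `G(x) = 1`.) -/
theorem rt_transmuted_is_df (G : ℝ → ℝ) (p : ℝ)
    (hG : Monotone G) (hGc : Continuous G)
    (hG0 : ∀ x, 0 ≤ G x) (hG1 : ∀ x, G x ≤ 1)
    (hGbot : Tendsto G atBot (𝓝 0)) (hGtop : Tendsto G atTop (𝓝 1))
    (hp0 : 0 ≤ p) (hp1 : p ≤ 1) :
    Monotone (fun x => G x + p * (1 - G x) * Real.log (1 - G x)) ∧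
    Tendsto (fun x => G x + p * (1 - G x) * Real.log (1 - G x)) atBot (𝓝 0) ∧
    Tendsto (fun x => G x + p * (1 - G x) * Real.log (1 - G x)) atTop (𝓝 1) := by
  refine ⟨?_, ?_, ?_⟩
  · intro x y hxy
    exact phi_mono p hp0 hp1 ⟨hG0 x, hG1 x⟩ ⟨hG0 y, hG1 y⟩ (hG hxy)
  · have h := ((phi_cont p).tendsto 0).comp hGbot
    simpa [Function.comp_def] using h
  · have h := ((phi_cont p).tendsto 1).comp hGtop
    simpa [Function.comp_def] using h
end

section
/- The function F(x) = 1 - [1 + p·(αx + βx²/2)^γ]·exp(-(αx + βx²/2)^γ), for x > 0, with F(x) = 0 for x ≤ 0, is a valid distribution function: it is nondecreasing on (0,∞), F(0+) = 0, and F(x) → 1 as x → ∞, provided α ≥ 0, β ≥ 0, not both zero, γ > 0, p ∈ [0,1]. -/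
open Filter Topology

private lemma g_hasDeriv (p t : ℝ) :
    HasDerivAt (fun t => 1 - (1 + p * t) * Real.exp (-t))
      ((1 - p + p * t) * Real.exp (-t)) t := by
  have h1 : HasDerivAt (fun t : ℝ => 1 + p * t) p t := by
    simpa using ((hasDerivAt_id t).const_mul p).const_add (1:ℝ)
  have h2 : HasDerivAt (fun t : ℝ => Real.exp (-t)) (Real.exp (-t) * (-1)) t :=
    (hasDerivAt_neg t).exp
  have := (h1.fun_mul h2).const_sub 1
  refine this.congr_deriv ?_
  ring

private lemma g_mono (p : ℝ) (hp0 : 0 ≤ p) (hp1 : p ≤ 1) :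
    MonotoneOn (fun t => 1 - (1 + p * t) * Real.exp (-t)) (Set.Ici 0) := by
  apply monotoneOn_of_deriv_nonneg (convex_Ici 0)
  · exact (Continuous.continuousOn (by continuity))
  · intro t ht
    exact (g_hasDeriv p t).differentiableAt.differentiableWithinAt
  · intro t ht
    rw [interior_Ici] at ht
    rw [(g_hasDeriv p t).deriv]
    have ht' : (0:ℝ) < t := ht
    have : 0 ≤ 1 - p + p * t := by nlinarith
    positivity

private lemma g_tendsto_one (p : ℝ) :
    Tendsto (fun t => 1 - (1 + p * t) * Real.exp (-t)) atTop (𝓝 1) := by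
  have h1 : Tendsto (fun t : ℝ => (1 + p * t) * Real.exp (-t)) atTop (𝓝 0) := by
    have he : Tendsto (fun t : ℝ => Real.exp (-t)) atTop (𝓝 0) := by
      simpa using Real.tendsto_exp_neg_atTop_nhds_zero
    have hte : Tendsto (fun t : ℝ => t * Real.exp (-t)) atTop (𝓝 0) := by
      simpa using Real.tendsto_pow_mul_exp_neg_atTop_nhds_zero 1
    have := he.add ((hte.const_mul p))
    simp only [add_zero, mul_zero] at this
    convert this using 2 with t
    ring
  have := (tendsto_const_nhds (x := (1:ℝ)) (f := atTop)).sub h1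
  simpa using this

/-- The RTGLE distribution function `F(x) = 1 - [1 + p(αx+βx²/2)^γ]·exp(-(αx+βx²/2)^γ)`
for `x > 0` (and `0` for `x ≤ 0`) is a valid DF: nondecreasing on `(0,∞)`,
`F(0+) = 0`, and `F(x) → 1` as `x → ∞`. -/
theorem rtgle_is_df (α β γ p : ℝ) (hα : 0 ≤ α) (hβ : 0 ≤ β)
    (hαβ : ¬(α = 0 ∧ β = 0)) (hγ : 0 < γ) (hp0 : 0 ≤ p) (hp1 : p ≤ 1) :
    let F : ℝ → ℝ := fun x => if x ≤ 0 then 0 else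
      1 - (1 + p * (α * x + β * x ^ 2 / 2) ^ γ) * Real.exp (-(α * x + β * x ^ 2 / 2) ^ γ)
    MonotoneOn F (Set.Ioi 0) ∧
    Tendsto F (𝓝[>] 0) (𝓝 0) ∧
    Tendsto F atTop (𝓝 1) := by
  intro F
  set u : ℝ → ℝ := fun x => α * x + β * x ^ 2 / 2 with hu
  have hu_nonneg : ∀ x, 0 ≤ x → 0 ≤ u x := by
    intro x hx; simp only [hu]; positivity
  have hu_mono : ∀ x y, 0 ≤ x → x ≤ y → u x ≤ u y := by
    intro x y hx hxy; simp only [hu]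
    nlinarith [mul_le_mul_of_nonneg_left hxy hα,
      mul_le_mul_of_nonneg_left (pow_le_pow_left₀ hx hxy 2) hβ]
  have hFval : ∀ x, 0 < x →
      F x = 1 - (1 + p * (u x) ^ γ) * Real.exp (-(u x) ^ γ) := by
    intro x hx
    simp only [F, if_neg (not_le.mpr hx), hu]
  constructor
  · -- monotone
    intro x hx y hy hxy
    rw [hFval x hx, hFval y hy]
    have h1 : (0:ℝ) ≤ (u x) ^ γ := Real.rpow_nonneg (hu_nonneg x hx.le) γ
    have h2 : (0:ℝ) ≤ (u y) ^ γ := Real.rpow_nonneg (hu_nonneg y (lt_of_lt_of_le hx hxy).le) γ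
    have h3 : (u x) ^ γ ≤ (u y) ^ γ :=
      Real.rpow_le_rpow (hu_nonneg x hx.le) (hu_mono x y hx.le hxy) hγ.le
    exact g_mono p hp0 hp1 h1 h2 h3
  constructor
  · -- limit at 0+
    have hu0 : Tendsto u (𝓝[>] 0) (𝓝 0) := by
      have hcu : Continuous u := by simp only [hu]; continuity
      have := (hcu.tendsto 0).mono_left (nhdsWithin_le_nhds (s := Set.Ioi (0:ℝ)))
      simpa [hu] using this
    have hrpow : Tendsto (fun x => (u x) ^ γ) (𝓝[>] 0) (𝓝 0) := by
      have hc : ContinuousAt (fun y : ℝ => y ^ γ) 0 :=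
        Real.continuousAt_rpow_const 0 γ (Or.inr hγ.le)
      have := hc.tendsto.comp hu0
      simpa [Real.zero_rpow hγ.ne', Function.comp_def] using this
    have hg : ContinuousAt (fun t => 1 - (1 + p * t) * Real.exp (-t)) 0 := by
      exact (g_hasDeriv p 0).differentiableAt.continuousAt
    have := hg.tendsto.comp hrpow
    simp only [Function.comp_def] at this
    have h0 : (1:ℝ) - (1 + p * 0) * Real.exp (-0) = 0 := by simp
    rw [h0] at this
    refine this.congr' ?_
    filter_upwards [self_mem_nhdsWithin] with x hx
    exact (hFval x hx).symm
  · -- limit at ∞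
    have huT : Tendsto u atTop atTop := by
      rcases not_and_or.mp hαβ with h | h
      · have hα' : 0 < α := lt_of_le_of_ne hα (Ne.symm h)
        refine tendsto_atTop_mono' atTop ?_ (Tendsto.const_mul_atTop hα' tendsto_id)
        filter_upwards [eventually_ge_atTop (0:ℝ)] with x hx
        simp only [hu, id]; nlinarith [mul_nonneg hβ (sq_nonneg x)]
      · have hβ' : 0 < β := lt_of_le_of_ne hβ (Ne.symm h)
        have h2 : Tendsto (fun x : ℝ => β * x ^ 2 / 2) atTop atTop :=
          (Tendsto.const_mul_atTop hβ'
            (tendsto_pow_atTop (two_ne_zero))).atTop_div_const two_pos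
        refine tendsto_atTop_mono' atTop ?_ h2
        filter_upwards [eventually_ge_atTop (0:ℝ)] with x hx
        simp only [hu]; nlinarith [mul_nonneg hα hx]
    have hrT : Tendsto (fun x => (u x) ^ γ) atTop atTop :=
      (tendsto_rpow_atTop hγ).comp huT
    have := (g_tendsto_one p).comp hrT
    simp only [Function.comp_def] at this
    refine this.congr' ?_
    filter_upwards [eventually_gt_atTop (0:ℝ)] with x hx
    exact (hFval x hx).symm
end

section
/- Let η(z) = γ·z^{(γ-1)/γ}·α·(1-p+pz)·e^{-z} be the reparametrized RTGLE density with β = 0. If 0 < γ < 1/2 and p ∈ [0,1], then d/dz[log η(z)] = (1 - 1/γ)/z + p/(1-p+pz) - 1 < 0 for all z > 0, hence η is strictly decreasing on (0,∞). -/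
/-- With `β = 0` and `0 < γ < 1/2`, the logarithmic derivative
`(1 - 1/γ)/z + p/(1-p+pz) - 1` of the reparametrized RTGLE density
`η(z) = γ z^{(γ-1)/γ} α (1-p+pz) e^{-z}` is negative for all `z > 0`,
hence `η` is strictly decreasing on `(0,∞)`. -/
theorem rtgle_pdf_decreasing (α γ p : ℝ) (hα : 0 < α) (hγ0 : 0 < γ)
    (hγ : γ < 1 / 2) (hp0 : 0 ≤ p) (hp1 : p ≤ 1) :
    (∀ z > 0, (1 - 1 / γ) / z + p / (1 - p + p * z) - 1 < 0) ∧
    StrictAntiOn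
      (fun z => γ * z ^ ((γ - 1) / γ) * α * (1 - p + p * z) * Real.exp (-z))
      (Set.Ioi 0) := by
  set e : ℝ := (γ - 1) / γ with he
  have hinv : 2 < 1 / γ := by rw [lt_div_iff₀ hγ0]; linarith
  have hDpos : ∀ z : ℝ, 0 < z → 0 < 1 - p + p * z := by
    intro z hz
    rcases lt_or_eq_of_le hp1 with h | h
    · nlinarith
    · nlinarith
  have key : ∀ z > 0, (1 - 1 / γ) / z + p / (1 - p + p * z) - 1 < 0 := by
    intro z hz
    have hD := hDpos z hz
    have h1 : (1 - 1 / γ) / z < (-1) / z :=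
      (div_lt_div_iff_of_pos_right hz).mpr (by linarith)
    have h2 : p / (1 - p + p * z) ≤ 1 / z := by
      rw [div_le_div_iff₀ hD hz]; nlinarith
    have h3 : (-1 : ℝ) / z + 1 / z = 0 := by field_simp; ring
    linarith
  refine ⟨key, ?_⟩
  have hderiv : ∀ z ∈ interior (Set.Ioi (0:ℝ)),
      deriv (fun z => γ * z ^ e * α * (1 - p + p * z) * Real.exp (-z)) z < 0 := by
    intro z hz
    rw [interior_Ioi] at hz
    have hz0 : (0:ℝ) < z := hz
    have hD := hDpos z hz0
    have hrpow : HasDerivAt (fun x : ℝ => x ^ e) (e * z ^ (e - 1)) z :=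
      Real.hasDerivAt_rpow_const (Or.inl hz0.ne')
    have hlin : HasDerivAt (fun x : ℝ => 1 - p + p * x) p z := by
      simpa using ((hasDerivAt_id z).const_mul p).const_add (1 - p)
    have hexp : HasDerivAt (fun x : ℝ => Real.exp (-x)) (Real.exp (-z) * (-1)) z :=
      (Real.hasDerivAt_exp (-z)).comp z ((hasDerivAt_id z).neg) |>.congr_deriv (by ring)
    have hg1 : HasDerivAt (fun x : ℝ => γ * x ^ e * α * (1 - p + p * x))
        ((γ * (e * z ^ (e - 1)) * α) * (1 - p + p * z) + (γ * z ^ e * α) * p) z :=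
      (((hrpow.const_mul γ).mul_const α).mul hlin)
    have hf : HasDerivAt (fun x => γ * x ^ e * α * (1 - p + p * x) * Real.exp (-x))
        (((γ * (e * z ^ (e - 1)) * α) * (1 - p + p * z) + (γ * z ^ e * α) * p)
          * Real.exp (-z)
          + (γ * z ^ e * α * (1 - p + p * z)) * (Real.exp (-z) * (-1))) z :=
      hg1.mul hexp
    rw [hf.deriv]
    have hfact : ((γ * (e * z ^ (e - 1)) * α) * (1 - p + p * z) + (γ * z ^ e * α) * p)
          * Real.exp (-z)
          + (γ * z ^ e * α * (1 - p + p * z)) * (Real.exp (-z) * (-1))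
        = (γ * α * Real.exp (-z) * z ^ e * (1 - p + p * z))
          * ((1 - 1 / γ) / z + p / (1 - p + p * z) - 1) := by
      have hz1 : z ^ (e - 1) = z ^ e / z := Real.rpow_sub_one hz0.ne' e
      have heq : e = 1 - 1 / γ := by rw [he, sub_div, div_self hγ0.ne']
      rw [hz1, heq]
      have hDp : (1 - p + p * z) * (p / (1 - p + p * z)) = p := mul_div_cancel₀ p hD.ne'
      linear_combination (-(γ * α * Real.exp (-z) * z ^ (1 - 1 / γ))) * hDp
    rw [hfact]
    have hpos : 0 < γ * α * Real.exp (-z) * z ^ e * (1 - p + p * z) := by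
      have := Real.rpow_pos_of_pos hz0 e
      positivity
    exact mul_neg_of_pos_of_neg hpos (key z hz0)
  have hcont : ContinuousOn (fun z => γ * z ^ e * α * (1 - p + p * z) * Real.exp (-z))
      (Set.Ioi (0:ℝ)) := by
    intro z hz
    have hz0 : (0:ℝ) < z := hz
    apply ContinuousAt.continuousWithinAt
    have h1 : ContinuousAt (fun x : ℝ => x ^ e) z :=
      Real.continuousAt_rpow_const z e (Or.inl hz0.ne')
    fun_prop
  exact strictAntiOn_of_deriv_neg (convex_Ioi 0) hcont hderiv
end

section
/- Let α, β > 0, γ > 0, p ∈ (0,1], and u ∈ (0,1). Define C = (-(1/p)·[1 + p·W_{-1}((u-1)/(p·e^{1/p}))])^{1/γ} and Q(u) = (-α + √(α² + 2βC))/β. Then Q(u) > 0 and F(Q(u)) = u, where F is the RTGLE distribution function F(x) = 1 - [1 + p(αx+βx²/2)^γ]·e^{-(αx+βx²/2)^γ}. -/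
/-- The closed-form quantile `Q(u) = (-α + √(α² + 2βC))/β`, with
`C = (-(1/p)[1 + p·W₋₁((u-1)/(p e^{1/p}))])^{1/γ}`, is positive and satisfies
`F(Q(u)) = u` for the RTGLE distribution function `F`. Here `W` is any function
acting as the negative branch of the Lambert W function on `[-1/e, 0)`. -/
theorem rtgle_quantile (α β γ p u : ℝ) (W : ℝ → ℝ)
    (hα : 0 < α) (hβ : 0 < β) (hγ : 0 < γ) (hp0 : 0 < p) (hp1 : p ≤ 1)
    (hu0 : 0 < u) (hu1 : u < 1)
    (hW : ∀ v : ℝ, -(1 / Real.exp 1) ≤ v → v < 0 →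
      W v * Real.exp (W v) = v ∧ W v ≤ -1) :
    let C : ℝ := (-(1 / p) * (1 + p * W ((u - 1) / (p * Real.exp (1 / p))))) ^ (1 / γ)
    let Q : ℝ := (-α + Real.sqrt (α ^ 2 + 2 * β * C)) / β
    0 < Q ∧
    1 - (1 + p * (α * Q + β * Q ^ 2 / 2) ^ γ) *
        Real.exp (-(α * Q + β * Q ^ 2 / 2) ^ γ) = u := by
  intro C Q
  have hCdef : C = (-(1 / p) * (1 + p * W ((u - 1) / (p * Real.exp (1 / p))))) ^ (1 / γ) := rfl
  have hQdef : Q = (-α + Real.sqrt (α ^ 2 + 2 * β * C)) / β := rfl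
  clear_value C Q
  have hE : (0:ℝ) < Real.exp (1 / p) := Real.exp_pos _
  have hep : (0:ℝ) < p * Real.exp (1 / p) := by positivity
  set v : ℝ := (u - 1) / (p * Real.exp (1 / p)) with hv_def
  have hv_neg : v < 0 := div_neg_of_neg_of_pos (by linarith) hep
  -- p * exp(1/p) ≥ e
  have hpe : Real.exp 1 ≤ p * Real.exp (1 / p) := by
    have hlog : Real.log (1 / p) ≤ 1 / p - 1 := Real.log_le_sub_one_of_pos (by positivity)
    have h1 : (1:ℝ) ≤ Real.log p + 1 / p := by
      rw [Real.log_div one_ne_zero (ne_of_gt hp0), Real.log_one] at hlog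
      linarith
    calc Real.exp 1 ≤ Real.exp (Real.log p + 1 / p) := Real.exp_le_exp.2 h1
      _ = p * Real.exp (1 / p) := by rw [Real.exp_add, Real.exp_log hp0]
  have hv_ge : -(1 / Real.exp 1) ≤ v := by
    rw [hv_def, le_div_iff₀ hep]
    have he1 : (0:ℝ) < Real.exp 1 := Real.exp_pos 1
    have h2 : (1 / Real.exp 1) * Real.exp 1 ≤ (1 / Real.exp 1) * (p * Real.exp (1 / p)) :=
      mul_le_mul_of_nonneg_left hpe (by positivity)
    have h3 : (1 / Real.exp 1) * Real.exp 1 = 1 := by field_simp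
    nlinarith
  obtain ⟨hwe, hwle⟩ := hW v hv_ge hv_neg
  set w : ℝ := W v with hw_def
  -- the key identity: w e^w (p e^{1/p}) = u - 1
  have hval : w * Real.exp w * (p * Real.exp (1 / p)) = u - 1 := by
    rw [hwe, hv_def]
    field_simp
  -- w < -(1/p)
  have hw : w < -(1 / p) := by
    by_contra hcon
    push_neg at hcon
    have ha1 : (1:ℝ) ≤ -w := by linarith
    have ha2 : -w ≤ 1 / p := by linarith
    have hexp1 : 1 / p - (-w) + 1 ≤ Real.exp (1 / p - (-w)) := by
      have := Real.add_one_le_exp (1 / p - (-w))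
      linarith
    have h3 : 1 / p ≤ (-w) * Real.exp (1 / p - (-w)) := by
      have hr : (-w) * (1 / p - (-w) + 1) - 1 / p = (-w - 1) * (1 / p - (-w)) := by ring
      nlinarith [Real.exp_pos (1 / p - (-w))]
    have h4 : Real.exp (1 / p - (-w)) = Real.exp (1 / p) * Real.exp w := by
      rw [← Real.exp_add]; ring_nf
    rw [h4] at h3
    have h5 : p * (1 / p) ≤ p * ((-w) * (Real.exp (1 / p) * Real.exp w)) :=
      mul_le_mul_of_nonneg_left h3 hp0.le
    have hpp : p * (1 / p) = 1 := by field_simp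
    nlinarith [hval]
  -- positivity of T
  have hTeq : -(1 / p) * (1 + p * w) = -(1 / p) - w := by field_simp; ring
  have hT : 0 < -(1 / p) * (1 + p * w) := by rw [hTeq]; linarith
  have hC_pos : 0 < C := hCdef ▸ Real.rpow_pos_of_pos hT _
  have hCγ : C ^ γ = -(1 / p) * (1 + p * w) := by
    rw [hCdef, ← Real.rpow_mul hT.le, one_div_mul_cancel (ne_of_gt hγ), Real.rpow_one]
  -- the square root
  set s : ℝ := Real.sqrt (α ^ 2 + 2 * β * C) with hs_def
  have hs_nonneg : 0 ≤ s := Real.sqrt_nonneg _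
  have hs_sq : s ^ 2 = α ^ 2 + 2 * β * C := Real.sq_sqrt (by positivity)
  have hs_gt : α < s := by nlinarith
  have hQ_pos : 0 < Q := by rw [hQdef]; exact div_pos (by linarith) hβ
  refine ⟨hQ_pos, ?_⟩
  have hQC : α * Q + β * Q ^ 2 / 2 = C := by
    rw [hQdef]; field_simp; linear_combination hs_sq
  rw [hQC, hCγ]
  have h1 : 1 + p * (-(1 / p) * (1 + p * w)) = -(p * w) := by field_simp; ring
  have h2 : -(-(1 / p) * (1 + p * w)) = 1 / p + w := by field_simp
  rw [h1, h2, Real.exp_add]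
  linear_combination hval
end

section
/- If X has the RTGLE(α,β,γ,p) distribution, then E[(αX + βX²/2)^r] = (1 + pr/γ)·Γ(r/γ + 1) for every real r ≥ 0, where Γ is the gamma function. -/
open MeasureTheory

/-- The RTGLE probability density function. -/
noncomputable def rtglePDF (α β γ p : ℝ) (x : ℝ) : ℝ :=
  γ * (α + β * x) * (α * x + β * x ^ 2 / 2) ^ (γ - 1) *
    (1 - p + p * (α * x + β * x ^ 2 / 2) ^ γ) *
    Real.exp (-(α * x + β * x ^ 2 / 2) ^ γ)

/-- Integrability of `y^q * exp (-y^γ)` on `Ioi 0`. -/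
lemma rtgle_aux_integrable {γ q : ℝ} (hγ : 0 < γ) (hq : -1 < q) :
    IntegrableOn (fun y : ℝ => y ^ q * Real.exp (-y ^ γ)) (Set.Ioi 0) := by
  have hpos : 0 < (q + 1) / γ := div_pos (by linarith) hγ
  have hf : IntegrableOn (fun y : ℝ => y ^ ((q + 1) / γ - 1) * Real.exp (-y)) (Set.Ioi 0) := by
    have := Real.GammaIntegral_convergent hpos
    exact this.congr_fun (fun x _ => by ring) measurableSet_Ioi
  have h := (integrableOn_Ioi_comp_rpow_iff
      (fun y : ℝ => y ^ ((q + 1) / γ - 1) * Real.exp (-y)) hγ.ne').mpr hf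
  have h2 : IntegrableOn (fun x : ℝ =>
      γ⁻¹ * ((|γ| * x ^ (γ - 1)) • ((x ^ γ) ^ ((q + 1) / γ - 1) * Real.exp (-x ^ γ))))
      (Set.Ioi 0) := h.const_mul γ⁻¹
  refine h2.congr_fun (fun x hx => ?_) measurableSet_Ioi
  have hx0 : (0:ℝ) < x := hx
  have hxγ : (x ^ γ : ℝ) = x ^ γ := rfl
  have habs : |γ| = γ := abs_of_pos hγ
  have hrw : (x ^ γ) ^ ((q + 1) / γ - 1) = x ^ (q + 1 - γ) := by
    rw [← Real.rpow_mul hx0.le]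
    congr 1
    field_simp
  simp only [smul_eq_mul, habs, hrw]
  rw [show x ^ q = x ^ (γ - 1) * x ^ (q + 1 - γ) by
    rw [← Real.rpow_add hx0]; ring_nf]
  field_simp

/-- The value of the transformed integral. -/
lemma rtgle_aux_integral {γ p r : ℝ} (hγ : 0 < γ) (hr : 0 ≤ r) :
    ∫ y in Set.Ioi (0:ℝ),
        y ^ r * (γ * y ^ (γ - 1) * (1 - p + p * y ^ γ) * Real.exp (-y ^ γ))
      = (1 + p * r / γ) * Real.Gamma (r / γ + 1) := by
  have h1 : (-1:ℝ) < r + γ - 1 := by linarith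
  have h2 : (-1:ℝ) < r + 2 * γ - 1 := by linarith
  have hA := integral_rpow_mul_exp_neg_rpow hγ h1
  have hB := integral_rpow_mul_exp_neg_rpow hγ h2
  have hIA := (rtgle_aux_integrable hγ h1).const_mul ((1 - p) * γ)
  have hIB := (rtgle_aux_integrable hγ h2).const_mul (p * γ)
  have hsplit : ∫ y in Set.Ioi (0:ℝ),
      y ^ r * (γ * y ^ (γ - 1) * (1 - p + p * y ^ γ) * Real.exp (-y ^ γ))
      = ∫ y in Set.Ioi (0:ℝ),
        ((1 - p) * γ) * (y ^ (r + γ - 1) * Real.exp (-y ^ γ))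
          + (p * γ) * (y ^ (r + 2 * γ - 1) * Real.exp (-y ^ γ)) := by
    refine setIntegral_congr_fun measurableSet_Ioi (fun y hy => ?_)
    have hy0 : (0:ℝ) < y := hy
    have e1 : y ^ (r + γ - 1) = y ^ r * y ^ (γ - 1) := by
      rw [← Real.rpow_add hy0]; ring_nf
    have e2 : y ^ (r + 2 * γ - 1) = y ^ r * y ^ (γ - 1) * y ^ γ := by
      rw [← Real.rpow_add hy0, ← Real.rpow_add hy0]; ring_nf
    rw [e1, e2]; ring
  rw [hsplit, integral_add hIA hIB, integral_const_mul, integral_const_mul, hA, hB]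
  have hγ' : γ ≠ 0 := hγ.ne'
  have eq1 : (r + γ - 1 + 1) / γ = r / γ + 1 := by field_simp; ring
  have eq2 : (r + 2 * γ - 1 + 1) / γ = r / γ + 1 + 1 := by field_simp; ring
  rw [eq1, eq2, Real.Gamma_add_one (by positivity : r / γ + 1 ≠ 0)]
  field_simp
  ring

/-- If `X ∼ RTGLE(α,β,γ,p)`, then `E[(αX + βX²/2)^r] = (1 + pr/γ)·Γ(r/γ + 1)`
for every real `r ≥ 0`. -/
theorem rtgle_power_moment (α β γ p r : ℝ) (hα : 0 ≤ α) (hβ : 0 ≤ β)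
    (hαβ : ¬(α = 0 ∧ β = 0)) (hγ : 0 < γ) (hp0 : 0 ≤ p) (hp1 : p ≤ 1) (hr : 0 ≤ r) :
    ∫ x in Set.Ioi (0 : ℝ), (α * x + β * x ^ 2 / 2) ^ r * rtglePDF α β γ p x
      = (1 + p * r / γ) * Real.Gamma (r / γ + 1) := by
  have hpos : 0 < α ∨ 0 < β := by
    rcases hα.lt_or_eq with h | h
    · exact Or.inl h
    · rcases hβ.lt_or_eq with h' | h'
      · exact Or.inr h'
      · exact absurd ⟨h.symm, h'.symm⟩ hαβ
  set g : ℝ → ℝ := fun x => α * x + β * x ^ 2 / 2 with hg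
  set h : ℝ → ℝ := fun y =>
    y ^ r * (γ * y ^ (γ - 1) * (1 - p + p * y ^ γ) * Real.exp (-y ^ γ)) with hh
  have hgpos : ∀ x ∈ Set.Ioi (0:ℝ), 0 < g x := by
    intro x hx
    have hx0 : (0:ℝ) < x := hx
    rcases hpos with hc | hc
    · simp only [hg]; nlinarith [mul_pos hc hx0, mul_nonneg hβ (sq_nonneg x)]
    · simp only [hg]; nlinarith [mul_nonneg hα hx0.le, mul_pos hc (pow_pos hx0 2)]
  have hderiv : ∀ x ∈ Set.Ioi (0:ℝ), HasDerivWithinAt g (α + β * x) (Set.Ioi 0) x := by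
    intro x _
    have h1 : HasDerivAt g (α * 1 + β * (↑2 * x ^ 1) / 2) x :=
      (((hasDerivAt_id x).const_mul α).add
        (((hasDerivAt_pow 2 x).const_mul β).div_const 2))
    have h2 : α * 1 + β * (↑2 * x ^ 1) / 2 = α + β * x := by push_cast; ring
    exact (h2 ▸ h1).hasDerivWithinAt
  have hinj : Set.InjOn g (Set.Ioi 0) := by
    apply StrictMonoOn.injOn
    intro x hx y hy hxy
    have hx0 : (0:ℝ) < x := hx
    have hy0 : (0:ℝ) < y := hy
    rcases hpos with hc | hc
    · simp only [hg]
      nlinarith [mul_lt_mul_of_pos_left hxy hc,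
        mul_nonneg hβ (sub_nonneg.mpr (pow_le_pow_left₀ hx0.le hxy.le 2))]
    · simp only [hg]
      nlinarith [mul_lt_mul_of_pos_left
          (pow_lt_pow_left₀ hxy hx0.le (by norm_num : 2 ≠ 0)) hc,
        mul_nonneg hα (sub_nonneg.mpr hxy.le)]
  have himg : g '' Set.Ioi 0 = Set.Ioi 0 := by
    ext z
    constructor
    · rintro ⟨x, hx, rfl⟩; exact hgpos x hx
    · intro hz
      have hz0 : (0:ℝ) < z := hz
      have hM : ∃ M : ℝ, 0 ≤ M ∧ z ≤ g M := by
        rcases hpos with hc | hc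
        · refine ⟨z / α, (div_pos hz0 hc).le, ?_⟩
          have e : α * (z / α) = z := by field_simp
          simp only [hg]
          nlinarith [sq_nonneg (z / α)]
        · refine ⟨Real.sqrt (2 * z / β), Real.sqrt_nonneg _, ?_⟩
          have e : Real.sqrt (2 * z / β) ^ 2 = 2 * z / β :=
            Real.sq_sqrt (by positivity)
          have e2 : β * (2 * z / β) / 2 = z := by field_simp
          simp only [hg]
          nlinarith [mul_nonneg hα (Real.sqrt_nonneg (2 * z / β))]
      obtain ⟨M, hM0, hMz⟩ := hM
      have hcont : ContinuousOn g (Set.Icc 0 M) := by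
        apply Continuous.continuousOn; simp only [hg]; continuity
      have hg0 : g 0 = 0 := by simp [hg]
      have hz' : z ∈ Set.Icc (g 0) (g M) := ⟨by rw [hg0]; exact hz0.le, hMz⟩
      obtain ⟨x, hx, hgx⟩ := intermediate_value_Icc hM0 hcont hz'
      refine ⟨x, ?_, hgx⟩
      rcases hx.1.lt_or_eq with h' | h'
      · exact h'
      · exfalso; rw [← h', hg0] at hgx; exact hz0.ne' hgx.symm
  calc ∫ x in Set.Ioi (0 : ℝ), (α * x + β * x ^ 2 / 2) ^ r * rtglePDF α β γ p x
      = ∫ x in Set.Ioi (0 : ℝ), |α + β * x| • h (g x) := by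
        refine setIntegral_congr_fun measurableSet_Ioi (fun x hx => ?_)
        have hx0 : (0:ℝ) < x := hx
        have habs : |α + β * x| = α + β * x :=
          abs_of_nonneg (add_nonneg hα (mul_nonneg hβ hx0.le))
        simp only [hh, hg, smul_eq_mul, habs, rtglePDF]
        ring
    _ = ∫ y in g '' Set.Ioi 0, h y :=
        (integral_image_eq_integral_abs_deriv_smul measurableSet_Ioi hderiv hinj h).symm
    _ = (1 + p * r / γ) * Real.Gamma (r / γ + 1) := by
        rw [himg]; exact rtgle_aux_integral hγ hr
end

section
/- If X has RTGLE(α,β,γ,p) distribution with β > 0, then the first-moment recurrence (β/2)·E[X²] + α·E[X] = (1 + p/γ)·Γ(1/γ + 1) holds, and consequently Var(X) = (2/β)·[(1 + p/γ)·Γ(1/γ + 1) - α·E[X]] - (E[X])². -/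
open MeasureTheory

/-- First-moment recurrence `(β/2)E[X²] + αE[X] = (1 + p/γ)Γ(1/γ + 1)` for
`X ∼ RTGLE(α,β,γ,p)` with `β > 0`, and the resulting variance formula
`Var(X) = (2/β)[(1 + p/γ)Γ(1/γ+1) - αE[X]] - (E[X])²`. -/
theorem rtgle_moment_recurrence_and_variance (α β γ p : ℝ)
    (hα : 0 ≤ α) (hβ : 0 < β) (hγ : 0 < γ) (hp0 : 0 ≤ p) (hp1 : p ≤ 1)
    (hI1 : IntegrableOn (fun x => x * rtglePDF α β γ p x) (Set.Ioi 0))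
    (hI2 : IntegrableOn (fun x => x ^ 2 * rtglePDF α β γ p x) (Set.Ioi 0)) :
    (β / 2) * (∫ x in Set.Ioi (0 : ℝ), x ^ 2 * rtglePDF α β γ p x) +
        α * (∫ x in Set.Ioi (0 : ℝ), x * rtglePDF α β γ p x)
      = (1 + p / γ) * Real.Gamma (1 / γ + 1) ∧
    (∫ x in Set.Ioi (0 : ℝ), x ^ 2 * rtglePDF α β γ p x) -
        (∫ x in Set.Ioi (0 : ℝ), x * rtglePDF α β γ p x) ^ 2
      = (2 / β) * ((1 + p / γ) * Real.Gamma (1 / γ + 1) -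
          α * (∫ x in Set.Ioi (0 : ℝ), x * rtglePDF α β γ p x)) -
        (∫ x in Set.Ioi (0 : ℝ), x * rtglePDF α β γ p x) ^ 2 := by
  set g : ℝ → ℝ := fun x => α * x + β * x ^ 2 / 2 with hg
  set φ : ℝ → ℝ := fun x => (α * x + β * x ^ 2 / 2) ^ γ with hφ
  set φ' : ℝ → ℝ := fun x => γ * (α * x + β * x ^ 2 / 2) ^ (γ - 1) * (α + β * x) with hφ'
  set h : ℝ → ℝ := fun s => s ^ (1 / γ) * (1 - p + p * s) * Real.exp (-s) with hh
  have hgpos : ∀ x ∈ Set.Ioi (0 : ℝ), 0 < α * x + β * x ^ 2 / 2 := by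
    intro x hx
    have hx0 : (0 : ℝ) < x := hx
    nlinarith [mul_nonneg hα hx0.le, mul_pos hβ (pow_pos hx0 2)]
  -- derivative of φ on Ioi 0
  have hgd : ∀ x : ℝ, HasDerivAt g (α + β * x) x := by
    intro x
    have h1 : HasDerivAt (fun y : ℝ => α * y) α x := by
      simpa using (hasDerivAt_id x).const_mul α
    have h2 : HasDerivAt (fun y : ℝ => β * y ^ 2 / 2) (β * x) x := by
      have := (((hasDerivAt_pow 2 x).const_mul β).div_const 2)
      refine this.congr_deriv ?_
      push_cast
      ring
    exact h1.add h2
  have hderiv : ∀ x ∈ Set.Ioi (0 : ℝ), HasDerivWithinAt φ (φ' x) (Set.Ioi 0) x := by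
    intro x hx
    have ht := hgpos x hx
    have : HasDerivAt φ (γ * (α * x + β * x ^ 2 / 2) ^ (γ - 1) * (α + β * x)) x := by
      have h' := (hgd x).rpow_const (p := γ) (Or.inl (ne_of_gt ht))
      convert h' using 1
      ring
    exact this.hasDerivWithinAt
  -- strict monotonicity and injectivity
  have hmono : StrictMonoOn φ (Set.Ioi 0) := by
    intro x hx y hy hxy
    have h1 : α * x + β * x ^ 2 / 2 < α * y + β * y ^ 2 / 2 := by
      have hx0 : (0 : ℝ) < x := hx
      have h2 : α * x ≤ α * y := mul_le_mul_of_nonneg_left hxy.le hα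
      have h3 : x ^ 2 < y ^ 2 := by nlinarith
      have h4 : β * x ^ 2 < β * y ^ 2 := mul_lt_mul_of_pos_left h3 hβ
      linarith
    exact Real.rpow_lt_rpow (hgpos x hx).le h1 hγ
  have hinj : Set.InjOn φ (Set.Ioi 0) := hmono.injOn
  -- continuity of φ
  have hcontg : Continuous g := by continuity
  have hcont : Continuous φ := by
    apply hcontg.rpow_const
    intro x
    exact Or.inr hγ.le
  -- image of Ioi 0 under φ is Ioi 0
  have hφ0 : φ 0 = 0 := by
    simp [hφ, Real.zero_rpow (ne_of_gt hγ)]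
  have htop : Filter.Tendsto φ Filter.atTop Filter.atTop := by
    have h1 : Filter.Tendsto (fun x : ℝ => β * x ^ 2 / 2) Filter.atTop Filter.atTop := by
      exact ((Filter.tendsto_pow_atTop (two_ne_zero)).const_mul_atTop hβ).atTop_div_const two_pos
    have h2 : Filter.Tendsto g Filter.atTop Filter.atTop := by
      apply Filter.tendsto_atTop_mono' _ _ h1
      filter_upwards [Filter.eventually_ge_atTop (0 : ℝ)] with x hx
      have : 0 ≤ α * x := mul_nonneg hα hx
      simp [hg]
      linarith
    exact (tendsto_rpow_atTop hγ).comp h2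
  have himg : φ '' Set.Ioi 0 = Set.Ioi 0 := by
    apply Set.Subset.antisymm
    · rintro y ⟨x, hx, rfl⟩
      exact Real.rpow_pos_of_pos (hgpos x hx) γ
    · intro y hy
      have hy0 : (0 : ℝ) < y := hy
      obtain ⟨b, hb⟩ := ((htop.eventually_gt_atTop y).and
        (Filter.eventually_gt_atTop (0 : ℝ))).exists
      obtain ⟨hby, hb0⟩ := hb
      have hmem : y ∈ Set.Icc (φ 0) (φ b) := by
        constructor
        · rw [hφ0]; exact hy0.le
        · exact hby.le
      obtain ⟨x, hx, hxy⟩ := intermediate_value_Icc hb0.le hcont.continuousOn hmem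
      refine ⟨x, ?_, hxy⟩
      rcases lt_or_eq_of_le hx.1 with hlt | heq
      · exact hlt
      · exfalso
        rw [← heq, hφ0] at hxy
        exact hy0.ne hxy
  -- change of variables
  have key0 : ∫ s in Set.Ioi (0 : ℝ), h s = ∫ x in Set.Ioi (0 : ℝ), |φ' x| • h (φ x) := by
    conv_lhs => rw [← himg]
    exact integral_image_eq_integral_abs_deriv_smul measurableSet_Ioi hderiv hinj h
  -- pointwise identification with the moments integrand
  have hpt : ∀ x ∈ Set.Ioi (0 : ℝ),
      |φ' x| • h (φ x)
        = β / 2 * (x ^ 2 * rtglePDF α β γ p x) + α * (x * rtglePDF α β γ p x) := by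
    intro x hx
    have hx0 : (0 : ℝ) < x := hx
    have ht := hgpos x hx
    have habs : |φ' x| = φ' x := by
      apply abs_of_nonneg
      have h1 : (0 : ℝ) < (α * x + β * x ^ 2 / 2) ^ (γ - 1) := Real.rpow_pos_of_pos ht _
      have h2 : (0 : ℝ) < α + β * x := by nlinarith
      positivity
    rw [habs]
    have hroot : ((α * x + β * x ^ 2 / 2) ^ γ) ^ (1 / γ) = α * x + β * x ^ 2 / 2 := by
      rw [← Real.rpow_mul ht.le, mul_one_div_cancel (ne_of_gt hγ), Real.rpow_one]
    simp only [smul_eq_mul, hφ, hφ', hh, rtglePDF, hroot]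
    ring
  -- hence the moment combination equals ∫ h
  have hcombi : (β / 2) * (∫ x in Set.Ioi (0 : ℝ), x ^ 2 * rtglePDF α β γ p x) +
      α * (∫ x in Set.Ioi (0 : ℝ), x * rtglePDF α β γ p x)
        = ∫ s in Set.Ioi (0 : ℝ), h s := by
    rw [key0, setIntegral_congr_fun measurableSet_Ioi hpt,
      integral_add (hI2.const_mul _) (hI1.const_mul _),
      integral_const_mul, integral_const_mul]
  -- evaluate ∫ h via Gamma integrals
  have hg1 : (0 : ℝ) < 1 / γ + 1 := by positivity
  have hg2 : (0 : ℝ) < 1 / γ + 2 := by positivity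
  have hIG1 := Real.GammaIntegral_convergent hg1
  have hIG2 := Real.GammaIntegral_convergent hg2
  have hsplit : ∀ s ∈ Set.Ioi (0 : ℝ),
      h s = (1 - p) * (Real.exp (-s) * s ^ (1 / γ + 1 - 1))
          + p * (Real.exp (-s) * s ^ (1 / γ + 2 - 1)) := by
    intro s hs
    have hs0 : (0 : ℝ) < s := hs
    rw [show (1 / γ + 1 - 1) = 1 / γ by ring, show (1 / γ + 2 - 1) = 1 / γ + 1 by ring,
      Real.rpow_add hs0, Real.rpow_one]
    simp only [hh]
    ring
  have hval : ∫ s in Set.Ioi (0 : ℝ), h s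
      = (1 - p) * Real.Gamma (1 / γ + 1) + p * Real.Gamma (1 / γ + 2) := by
    rw [setIntegral_congr_fun measurableSet_Ioi hsplit,
      integral_add (hIG1.const_mul _) (hIG2.const_mul _),
      integral_const_mul, integral_const_mul,
      ← Real.Gamma_eq_integral hg1, ← Real.Gamma_eq_integral hg2]
  have hG2 : Real.Gamma (1 / γ + 2) = (1 / γ + 1) * Real.Gamma (1 / γ + 1) := by
    rw [show (1 / γ + 2) = (1 / γ + 1) + 1 by ring, Real.Gamma_add_one (ne_of_gt hg1)]
  have key : (β / 2) * (∫ x in Set.Ioi (0 : ℝ), x ^ 2 * rtglePDF α β γ p x) +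
      α * (∫ x in Set.Ioi (0 : ℝ), x * rtglePDF α β γ p x)
        = (1 + p / γ) * Real.Gamma (1 / γ + 1) := by
    rw [hcombi, hval, hG2]
    field_simp
    ring
  refine ⟨key, ?_⟩
  rw [← key]
  have hβ' : β ≠ 0 := ne_of_gt hβ
  field_simp
  ring
end

section
/- If X has RTGLE(α,β,γ,p) distribution, then for every positive integer r, the binomial-moment identity Σ_{i=0}^{r} C(r,i)·α^i·(β/2)^{r-i}·E[X^{2r-i}] = (1 + pr/γ)·Γ(r/γ + 1) holds, assuming all moments up to order 2r are finite. -/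
open MeasureTheory

/-- Binomial-moment identity for `X ∼ RTGLE(α,β,γ,p)`:
`∑ᵢ C(r,i) αⁱ (β/2)^{r-i} E[X^{2r-i}] = (1 + pr/γ)Γ(r/γ + 1)`. -/
theorem rtgle_binomial_moment_identity (α β γ p : ℝ) (r : ℕ) (hr : 1 ≤ r)
    (hα : 0 ≤ α) (hβ : 0 ≤ β) (hαβ : ¬(α = 0 ∧ β = 0)) (hγ : 0 < γ)
    (hp0 : 0 ≤ p) (hp1 : p ≤ 1)
    (hI : ∀ k ≤ 2 * r, IntegrableOn (fun x => x ^ k * rtglePDF α β γ p x) (Set.Ioi 0)) :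
    ∑ i ∈ Finset.range (r + 1),
        (r.choose i : ℝ) * α ^ i * (β / 2) ^ (r - i) *
          ∫ x in Set.Ioi (0 : ℝ), x ^ (2 * r - i) * rtglePDF α β γ p x
      = (1 + p * r / γ) * Real.Gamma (r / γ + 1) := by
  have hγ0 : γ ≠ 0 := hγ.ne'
  have hαβ' : 0 < α ∨ 0 < β := by
    rcases lt_or_eq_of_le hα with h | h
    · exact Or.inl h
    rcases lt_or_eq_of_le hβ with h2 | h2
    · exact Or.inr h2
    exact absurd ⟨h.symm, h2.symm⟩ hαβ
  set φ : ℝ → ℝ := fun x => α * x + β * x ^ 2 / 2 with hφdef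
  have hpos : ∀ x ∈ Set.Ioi (0 : ℝ), 0 < φ x := by
    intro x hx
    simp only [Set.mem_Ioi] at hx
    show (0:ℝ) < α * x + β * x ^ 2 / 2
    rcases hαβ' with h | h
    · have := mul_pos h hx
      nlinarith [mul_nonneg hβ (sq_nonneg x)]
    · nlinarith [mul_nonneg hα hx.le, mul_pos h (mul_pos hx hx)]
  have hdφ : ∀ x : ℝ, HasDerivAt φ (α + β * x) x := by
    intro x
    have h : HasDerivAt (fun x : ℝ => α * x + β * x ^ 2 / 2)
        (α * 1 + β * (↑2 * x ^ 1) / 2) x :=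
      ((hasDerivAt_id x).const_mul α).add (((hasDerivAt_pow 2 x).const_mul β).div_const 2)
    convert h using 1
    push_cast
    ring
  set a : ℝ := (r : ℝ) / γ with ha
  have ha0 : 0 < a := div_pos (by exact_mod_cast Nat.lt_of_lt_of_le Nat.zero_lt_one hr) hγ
  set ψ : ℝ → ℝ := fun x => φ x ^ γ with hψdef
  set g : ℝ → ℝ := fun u => u ^ a * (1 - p + p * u) * Real.exp (-u) with hgdef
  -- Step 1: LHS = ∫ φ^r * pdf
  have step1 : ∑ i ∈ Finset.range (r + 1),
        (r.choose i : ℝ) * α ^ i * (β / 2) ^ (r - i) *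
          ∫ x in Set.Ioi (0 : ℝ), x ^ (2 * r - i) * rtglePDF α β γ p x
      = ∫ x in Set.Ioi (0 : ℝ), φ x ^ r * rtglePDF α β γ p x := by
    have h1 : ∀ i ∈ Finset.range (r + 1),
        (r.choose i : ℝ) * α ^ i * (β / 2) ^ (r - i) *
            ∫ x in Set.Ioi (0 : ℝ), x ^ (2 * r - i) * rtglePDF α β γ p x
          = ∫ x in Set.Ioi (0 : ℝ),
              (r.choose i : ℝ) * α ^ i * (β / 2) ^ (r - i) *
                (x ^ (2 * r - i) * rtglePDF α β γ p x) := by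
      intro i _
      rw [MeasureTheory.integral_const_mul]
    rw [Finset.sum_congr rfl h1, ← integral_finset_sum]
    · apply setIntegral_congr_fun measurableSet_Ioi
      intro x _
      dsimp only
      have hbin := add_pow (α * x) (β * x ^ 2 / 2) r
      have : ∀ i ∈ Finset.range (r + 1),
          (α * x) ^ i * (β * x ^ 2 / 2) ^ (r - i) * (r.choose i : ℝ)
            = (r.choose i : ℝ) * α ^ i * (β / 2) ^ (r - i) * x ^ (2 * r - i) := by
        intro i hi
        have hir : i ≤ r := Nat.lt_succ_iff.mp (Finset.mem_range.mp hi)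
        have hx : x ^ i * (x ^ 2) ^ (r - i) = x ^ (2 * r - i) := by
          rw [← pow_mul, ← pow_add]
          congr 1
          omega
        calc (α * x) ^ i * (β * x ^ 2 / 2) ^ (r - i) * (r.choose i : ℝ)
            = (r.choose i : ℝ) * α ^ i * (β / 2) ^ (r - i) * (x ^ i * (x ^ 2) ^ (r - i)) := by
              rw [mul_pow, div_pow, mul_pow, div_pow]
              ring
          _ = (r.choose i : ℝ) * α ^ i * (β / 2) ^ (r - i) * x ^ (2 * r - i) := by rw [hx]
      show _ = (α * x + β * x ^ 2 / 2) ^ r * rtglePDF α β γ p x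
      rw [hbin, Finset.sum_mul]
      refine Finset.sum_congr rfl fun i hi => ?_
      rw [this i hi]
      ring
    · intro i hi
      have hir : 2 * r - i ≤ 2 * r := by omega
      exact (hI (2 * r - i) hir).const_mul _
  -- derivative of ψ
  set ψ' : ℝ → ℝ := fun x => γ * (α + β * x) * φ x ^ (γ - 1) with hψ'def
  have hdψ : ∀ x ∈ Set.Ioi (0 : ℝ), HasDerivAt ψ (ψ' x) x := by
    intro x hx
    have h := (hdφ x).rpow_const (p := γ) (Or.inl (hpos x hx).ne')
    convert h using 1
    ring
  have hψ'pos : ∀ x ∈ Set.Ioi (0 : ℝ), 0 < ψ' x := by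
    intro x hx
    simp only [Set.mem_Ioi] at hx
    have h1 : 0 < α + β * x := by
      rcases hαβ' with h | h
      · have := mul_nonneg hβ hx.le; linarith
      · have := mul_pos h hx; linarith
    exact mul_pos (mul_pos hγ h1) (Real.rpow_pos_of_pos (hpos x hx) _)
  -- ψ maps Ioi 0 onto Ioi 0
  have hψ0 : ψ 0 = 0 := by
    simp only [hψdef, hφdef]
    norm_num
    exact Real.zero_rpow hγ0
  have hψcont : Continuous ψ := by
    have hφc : Continuous φ := by fun_prop
    have : ∀ x : ℝ, ContinuousAt (fun u : ℝ => u ^ γ) (φ x) :=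
      fun x => Real.continuousAt_rpow_const _ _ (Or.inr hγ.le)
    exact continuous_iff_continuousAt.mpr fun x => (this x).comp hφc.continuousAt
  have hψtop : Filter.Tendsto ψ Filter.atTop Filter.atTop := by
    have hφtop : Filter.Tendsto φ Filter.atTop Filter.atTop := by
      have hc : 0 < α + β / 2 := by
        rcases hαβ' with h | h
        · linarith
        · linarith
      apply Filter.tendsto_atTop_mono' _ _
          (Filter.Tendsto.const_mul_atTop hc Filter.tendsto_id)
      filter_upwards [Filter.eventually_ge_atTop (1 : ℝ)] with x hx
      have hx0 : 0 ≤ x := by linarith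
      have : x ≤ x ^ 2 := by nlinarith
      simp only [hφdef, id_eq]
      nlinarith [mul_nonneg hβ (sub_nonneg.mpr this)]
    exact (tendsto_rpow_atTop hγ).comp hφtop
  have hψmono : StrictMonoOn ψ (Set.Ioi 0) := by
    intro x hx y hy hxy
    have hφx := hpos x hx
    have hφlt : φ x < φ y := by
      simp only [Set.mem_Ioi] at hx hy
      show α * x + β * x ^ 2 / 2 < α * y + β * y ^ 2 / 2
      rcases hαβ' with h | h
      · nlinarith [mul_pos h (by linarith : (0:ℝ) < y - x),
          mul_nonneg hβ (by nlinarith : (0:ℝ) ≤ y ^ 2 - x ^ 2)]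
      · nlinarith [mul_pos h (by nlinarith : (0:ℝ) < y ^ 2 - x ^ 2),
          mul_nonneg hα (by linarith : (0:ℝ) ≤ y - x)]
    exact Real.rpow_lt_rpow hφx.le hφlt hγ
  have himg : ψ '' Set.Ioi 0 = Set.Ioi 0 := by
    apply Set.Subset.antisymm
    · rintro _ ⟨x, hx, rfl⟩
      exact Real.rpow_pos_of_pos (hpos x hx) γ
    · intro y hy
      simp only [Set.mem_Ioi] at hy
      obtain ⟨b, hb1, hb2⟩ :=
        ((hψtop.eventually_gt_atTop y).and (Filter.eventually_gt_atTop (0 : ℝ))).exists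
      have hsub := intermediate_value_Ioo hb2.le hψcont.continuousOn (a := 0) (b := b)
      have hyin : y ∈ Set.Ioo (ψ 0) (ψ b) := by
        rw [hψ0]; exact ⟨hy, hb1⟩
      obtain ⟨x, hx, hxy⟩ := hsub hyin
      exact ⟨x, hx.1, hxy⟩
  -- Step 2: change of variables
  have step2 : ∫ u in Set.Ioi (0 : ℝ), g u
      = ∫ x in Set.Ioi (0 : ℝ), φ x ^ r * rtglePDF α β γ p x := by
    have h := integral_image_eq_integral_abs_deriv_smul measurableSet_Ioi
        (fun x hx => (hdψ x hx).hasDerivWithinAt) (hψmono.injOn) g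
    rw [himg] at h
    rw [h]
    apply setIntegral_congr_fun measurableSet_Ioi
    intro x hx
    have hφx := hpos x hx
    have habs : |ψ' x| = ψ' x := abs_of_pos (hψ'pos x hx)
    have hpow : (φ x ^ γ) ^ a = φ x ^ r := by
      rw [← Real.rpow_natCast (φ x) r, ← Real.rpow_mul hφx.le]
      congr 1
      rw [ha]
      field_simp
    show |ψ' x| • g (ψ x) = _
    rw [habs]
    simp only [smul_eq_mul, habs, hgdef, hψdef, hψ'def, rtglePDF, hpow]
    simp only [hφdef]
    ring
  -- Step 3: compute ∫ g
  have hga : a + 1 ≠ 0 := by positivity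
  have step3 : ∫ u in Set.Ioi (0 : ℝ), g u
      = (1 - p) * Real.Gamma (a + 1) + p * Real.Gamma (a + 2) := by
    have heq : ∀ u ∈ Set.Ioi (0 : ℝ),
        g u = (1 - p) * (Real.exp (-u) * u ^ (a + 1 - 1))
            + p * (Real.exp (-u) * u ^ (a + 2 - 1)) := by
      intro u hu
      simp only [Set.mem_Ioi] at hu
      have h1 : a + 1 - 1 = a := by ring
      have h2 : a + 2 - 1 = a + 1 := by ring
      rw [h1, h2, Real.rpow_add_one hu.ne']
      simp only [hgdef]
      ring
    rw [setIntegral_congr_fun measurableSet_Ioi heq, integral_add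
        ((Real.GammaIntegral_convergent (by positivity : (0:ℝ) < a + 1)).const_mul _)
        ((Real.GammaIntegral_convergent (by positivity : (0:ℝ) < a + 2)).const_mul _),
      MeasureTheory.integral_const_mul, MeasureTheory.integral_const_mul,
      ← Real.Gamma_eq_integral (by positivity : (0:ℝ) < a + 1),
      ← Real.Gamma_eq_integral (by positivity : (0:ℝ) < a + 2)]
  have hG2 : Real.Gamma (a + 2) = (a + 1) * Real.Gamma (a + 1) := by
    have := Real.Gamma_add_one hga
    rw [show a + 2 = a + 1 + 1 by ring, this]
  rw [step1, ← step2, step3, hG2]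
  have hpa : p * ↑r / γ = p * a := by rw [ha]; ring
  rw [hpa]
  ring
end
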